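/- A module M is H-supplemented if and only if for every submodule A of M there exists a direct summand A' of M such that for every submodule X of M, A + X = M holds if and only if A' + X = M. -/

import Mathlib

universe u v

/-- `N` is a small (superfluous) submodule of `M`. -/
def SmallSub (R : Type v) [Ring R] {M : Type u} [AddCommGroup M] [Module R M]
    (N : Submodule R M) : Prop :=
  ∀ X : Submodule R M, N ⊔ X = ⊤ → X = ⊤

/-- `D` is a direct summand of `M`. -/
def IsDirectSummand (R : Type v) [Ring R] {M : Type u} [AddCommGroup M] [Module R M]
    (D : Submodule R M) : Prop :=
  ∃ D' : Submodule R M, IsCompl D D'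

/-- `M` is H-supplemented: for every submodule `X` there is a direct summand `D`
with `(X+D)/D ≪ M/D` and `(X+D)/X ≪ M/X`. -/
def HSupplemented (R : Type v) [Ring R] (M : Type u) [AddCommGroup M] [Module R M] : Prop :=
  ∀ X : Submodule R M, ∃ D : Submodule R M, IsDirectSummand R D ∧
    SmallSub R ((X ⊔ D).map D.mkQ) ∧ SmallSub R ((X ⊔ D).map X.mkQ)

/-- Condition (D3). -/
def CondD3 (R : Type v) [Ring R] (M : Type u) [AddCommGroup M] [Module R M] : Prop :=
  ∀ K L : Submodule R M, IsDirectSummand R K → IsDirectSummand R L → K ⊔ L = ⊤ →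
    IsDirectSummand R (K ⊓ L)

lemma smallSub_quot {R : Type v} [Ring R] {M : Type u} [AddCommGroup M] [Module R M]
    (A D : Submodule R M) :
    SmallSub R ((A ⊔ D).map D.mkQ) ↔
      ∀ X : Submodule R M, A ⊔ D ⊔ X = ⊤ → D ⊔ X = ⊤ := by
  constructor
  · intro h X hX
    have hmap : (A ⊔ D).map D.mkQ ⊔ X.map D.mkQ = ⊤ := by
      rw [← Submodule.map_sup, hX, Submodule.map_top, Submodule.range_mkQ]
    have hXtop := h _ hmap
    have := congrArg (Submodule.comap D.mkQ) hXtop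
    rwa [Submodule.comap_map_eq, Submodule.ker_mkQ, Submodule.comap_top, sup_comm] at this
  · intro h Y hY
    set X := Y.comap D.mkQ with hXdef
    have hmapX : X.map D.mkQ = Y := by
      rw [Submodule.map_comap_eq, Submodule.range_mkQ, top_inf_eq]
    have htop : A ⊔ D ⊔ X = ⊤ := by
      have h1 : (A ⊔ D ⊔ X).map D.mkQ = ⊤ := by
        rw [Submodule.map_sup, hmapX, hY]
      have := congrArg (Submodule.comap D.mkQ) h1
      rw [Submodule.comap_map_eq, Submodule.ker_mkQ, Submodule.comap_top] at this
      have hle : D ≤ A ⊔ D ⊔ X := le_sup_of_le_left le_sup_right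
      rwa [sup_eq_left.mpr hle] at this
    have hDX := h X htop
    have hDle : D ≤ X := by
      rw [hXdef]
      intro x hx
      simp [Submodule.mem_comap, (Submodule.Quotient.mk_eq_zero D).mpr hx]
    have hXtop : X = ⊤ := by rwa [sup_eq_right.mpr hDle] at hDX
    rw [← hmapX, hXtop, Submodule.map_top, Submodule.range_mkQ]

theorem stmt2 {R : Type v} [Ring R] {M : Type u} [AddCommGroup M] [Module R M] :
    HSupplemented R M ↔
      ∀ A : Submodule R M, ∃ A' : Submodule R M, IsDirectSummand R A' ∧
        ∀ X : Submodule R M, (A ⊔ X = ⊤ ↔ A' ⊔ X = ⊤) := by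
  constructor
  · intro h A
    obtain ⟨D, hD, h1, h2⟩ := h A
    rw [smallSub_quot] at h1
    rw [sup_comm A D, smallSub_quot] at h2
    refine ⟨D, hD, fun X => ⟨fun hAX => ?_, fun hDX => ?_⟩⟩
    · exact h1 X (by rw [sup_right_comm, hAX, top_sup_eq])
    · exact h2 X (by rw [sup_right_comm, hDX, top_sup_eq])
  · intro h A
    obtain ⟨D, hD, hiff⟩ := h A
    refine ⟨D, hD, ?_, ?_⟩
    · rw [smallSub_quot]
      intro X hX
      have h1 : A ⊔ (D ⊔ X) = ⊤ := by rwa [← sup_assoc]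
      have h2 := (hiff _).mp h1
      rwa [← sup_assoc, sup_idem] at h2
    · rw [sup_comm A D, smallSub_quot]
      intro X hX
      have hAX : D ⊔ (A ⊔ X) = ⊤ := by rwa [← sup_assoc]
      have h2 : A ⊔ (A ⊔ X) = ⊤ := (hiff _).mpr hAX
      rwa [← sup_assoc, sup_idem] at h2
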